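/- The s-t reliability, viewed as a set function of the edge set, is not supermodular: there exist a finite vertex set V, vertices s, t ∈ V, a function p : V×V → ℝ taking values in [0,1], edge sets X ⊆ Y ⊆ V×V, and an edge x ∈ (V×V)∖Y such that R(s,t,(V, X∪{x}, p)) − R(s,t,(V, X, p)) > R(s,t,(V, Y∪{x}, p)) − R(s,t,(V, Y, p)). -/

import Mathlib

open scoped Classical

/-- The s-t reliability of the uncertain directed graph `(V, E, p)`:
the sum, over all possible worlds `S ⊆ E`, of the probability
`(∏ e ∈ S, p e) * (∏ e ∈ E \ S, (1 - p e))` of the world, counted when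
`t` is reachable from `s` using the edges of `S`. -/
noncomputable def reliability {V : Type} (E : Finset (V × V)) (p : V × V → ℝ)
    (s t : V) : ℝ :=
  ∑ S ∈ E.powerset,
    if Relation.ReflTransGen (fun a b => (a, b) ∈ S) s t then
      (∏ e ∈ S, p e) * ∏ e ∈ E \ S, (1 - p e)
    else 0

lemma reach_iff (S : Finset (Fin 3 × Fin 3)) (hS : S ⊆ {(0,1),(0,2),(1,2)}) :
    Relation.ReflTransGen (fun a b => (a, b) ∈ S) 0 2 ↔
      ((0,2) ∈ S ∨ ((0,1) ∈ S ∧ (1,2) ∈ S)) := by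
  constructor
  · intro h
    have key : ∀ b, Relation.ReflTransGen (fun a b => (a, b) ∈ S) 0 b →
        b = 0 ∨ (b = 1 ∧ (0,1) ∈ S) ∨
          (b = 2 ∧ ((0,2) ∈ S ∨ ((0,1) ∈ S ∧ (1,2) ∈ S))) := by
      intro b hb
      induction hb with
      | refl => left; rfl
      | @tail b c hab hbc ih =>
        have hm := hS hbc
        simp only [Finset.mem_insert, Finset.mem_singleton, Prod.mk.injEq] at hm
        rcases ih with h0 | ⟨h1, hS1⟩ | ⟨h2, hS2⟩
        · subst h0
          rcases hm with ⟨_, hc⟩ | ⟨_, hc⟩ | ⟨hb', _⟩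
          · subst hc; right; left; exact ⟨rfl, hbc⟩
          · subst hc; right; right; exact ⟨rfl, Or.inl hbc⟩
          · exact absurd hb' (by decide)
        · subst h1
          rcases hm with ⟨hb', _⟩ | ⟨hb', _⟩ | ⟨_, hc⟩
          · exact absurd hb' (by decide)
          · exact absurd hb' (by decide)
          · subst hc; right; right; exact ⟨rfl, Or.inr ⟨hS1, hbc⟩⟩
        · subst h2
          rcases hm with ⟨hb', _⟩ | ⟨hb', _⟩ | ⟨hb', _⟩ <;> exact absurd hb' (by decide)
    rcases key 2 h with h0 | ⟨h1, _⟩ | ⟨_, h2⟩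
    · exact absurd h0 (by decide)
    · exact absurd h1 (by decide)
    · exact h2
  · rintro (h | ⟨h1, h2⟩)
    · exact Relation.ReflTransGen.single h
    · exact Relation.ReflTransGen.trans (.single h1) (.single h2)

lemma rel_eq (E : Finset (Fin 3 × Fin 3)) (cond : Finset (Fin 3 × Fin 3) → Prop)
    [DecidablePred cond]
    (h : ∀ S ⊆ E, (Relation.ReflTransGen (fun a b => (a, b) ∈ S) (0 : Fin 3) 2 ↔ cond S)) :
    reliability E (fun _ => 1/2) 0 2 =
      ((E.powerset.filter cond).card : ℝ) * (1/2) ^ E.card := by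
  unfold reliability
  trans (∑ S ∈ E.powerset, if cond S then ((1:ℝ)/2) ^ E.card else 0)
  · refine Finset.sum_congr rfl fun S hS => ?_
    rw [Finset.mem_powerset] at hS
    rw [if_congr (h S hS) rfl rfl]
    congr 1
    have h2 : (∏ _x ∈ S, ((1:ℝ)/2)) * ∏ _x ∈ E \ S, ((1:ℝ) - 1/2) = ((1:ℝ)/2) ^ E.card := by
      have h3 : ((1:ℝ) - 1/2) = 1/2 := by norm_num
      rw [h3, mul_comm, Finset.prod_sdiff hS, Finset.prod_const]
    convert h2 using 2
    congr!
  · rw [← Finset.sum_filter, Finset.sum_const, nsmul_eq_mul]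

/-- The s-t reliability, viewed as a set function of the edge set, is not
supermodular: there exist a finite vertex set `V`, vertices `s t : V`, edge
probabilities `p` with values in `[0,1]`, edge sets `X ⊆ Y` and an edge
`x ∉ Y` such that the marginal gain of `x` on top of `X` is strictly larger
than the marginal gain of `x` on top of `Y`. -/
theorem stmt3 :
    ∃ (V : Type) (_ : Fintype V) (s t : V) (p : V × V → ℝ)
      (X Y : Finset (V × V)) (x : V × V),
      (∀ e, 0 ≤ p e ∧ p e ≤ 1) ∧ X ⊆ Y ∧ x ∉ Y ∧
      reliability (insert x X) p s t - reliability X p s t >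
        reliability (insert x Y) p s t - reliability Y p s t := by
  refine ⟨Fin 3, inferInstance, 0, 2, fun _ => 1/2, {(0,1)}, {(0,1),(0,2)}, (1,2),
    fun e => by norm_num, by decide, by decide, ?_⟩
  have hc : ∀ (E : Finset (Fin 3 × Fin 3)), E ⊆ {(0,1),(0,2),(1,2)} →
      reliability E (fun _ => 1/2) 0 2 =
      ((E.powerset.filter (fun S => (0,2) ∈ S ∨ ((0,1) ∈ S ∧ (1,2) ∈ S))).card : ℝ)
        * (1/2) ^ E.card := by
    intro E hE
    exact rel_eq E _ (fun S hS => reach_iff S (hS.trans hE))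
  have hinst : (fun a b => @instDecidableEqProd (Fin 3) (Fin 3)
      (fun a b => Classical.propDecidable (a = b))
      (fun a b => Classical.propDecidable (a = b)) a b)
      = (instDecidableEqProd : DecidableEq (Fin 3 × Fin 3)) := Subsingleton.elim _ _
  rw [hinst]
  rw [hc _ (by simp [Finset.insert_subset_iff]), hc _ (by simp [Finset.insert_subset_iff]),
    hc _ (by simp [Finset.insert_subset_iff]), hc _ (by simp [Finset.insert_subset_iff])]
  have c1 : (Finset.filter (fun S => (0,2) ∈ S ∨ ((0,1) ∈ S ∧ (1,2) ∈ S))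
      ((insert ((1:Fin 3),(2:Fin 3)) {(0,1)} : Finset (Fin 3 × Fin 3)).powerset)).card = 1 := by
    decide
  have c2 : (Finset.filter (fun S => (0,2) ∈ S ∨ ((0,1) ∈ S ∧ (1,2) ∈ S))
      (({(0,1)} : Finset (Fin 3 × Fin 3)).powerset)).card = 0 := by
    decide
  have c3 : (Finset.filter (fun S => (0,2) ∈ S ∨ ((0,1) ∈ S ∧ (1,2) ∈ S))
      ((insert ((1:Fin 3),(2:Fin 3)) {(0,1),(0,2)} : Finset (Fin 3 × Fin 3)).powerset)).card = 5 := by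
    decide
  have c4 : (Finset.filter (fun S => (0,2) ∈ S ∨ ((0,1) ∈ S ∧ (1,2) ∈ S))
      (({(0,1),(0,2)} : Finset (Fin 3 × Fin 3)).powerset)).card = 2 := by
    decide
  rw [c1, c2, c3, c4]
  have d1 : (insert ((1:Fin 3),(2:Fin 3)) {(0,1)} : Finset (Fin 3 × Fin 3)).card = 2 := by decide
  have d2 : (({(0,1)} : Finset (Fin 3 × Fin 3))).card = 1 := by decide
  have d3 : (insert ((1:Fin 3),(2:Fin 3)) {(0,1),(0,2)} : Finset (Fin 3 × Fin 3)).card = 3 := by decide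
  have d4 : (({(0,1),(0,2)} : Finset (Fin 3 × Fin 3))).card = 2 := by decide
  rw [d1, d2, d3, d4]
  norm_num
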